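/- Given the water autoprotolysis equilibrium [OH⁻][H⁺] = K_w², the full electroneutrality condition β b − α a + h − K_w²/h = 0 with α = K_a/(K_a + h), β = h/(K_b + h) has at least one solution h > 0, for any positive parameters a, b, K_a, K_b, K_w. -/

import Mathlib

/-- The full electroneutrality equation for an acid-base buffer with water
autoprotolysis has at least one positive solution. -/
theorem stmt_8 (a b Ka Kb Kw : ℝ) (ha : 0 < a) (hb : 0 < b) (hKa : 0 < Ka)
    (hKb : 0 < Kb) (hKw : 0 < Kw) :
    ∃ h : ℝ, 0 < h ∧
      (h / (Kb + h)) * b - (Ka / (Ka + h)) * a + h - Kw ^ 2 / h = 0 := by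
  set f : ℝ → ℝ := fun h => (h / (Kb + h)) * b - (Ka / (Ka + h)) * a + h - Kw ^ 2 / h with hf
  set h₀ : ℝ := min 1 (Kw ^ 2 / (b + 2)) with hh₀
  set h₁ : ℝ := max 1 (a + 1 + Kw ^ 2) with hh₁
  have hKw2 : 0 < Kw ^ 2 := by positivity
  have h₀pos : 0 < h₀ := lt_min one_pos (by positivity)
  have h₀le1 : h₀ ≤ 1 := min_le_left _ _
  have h₁ge1 : (1 : ℝ) ≤ h₁ := le_max_left _ _
  have h₀le₁ : h₀ ≤ h₁ := h₀le1.trans h₁ge1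
  have hpos : ∀ x ∈ Set.Icc h₀ h₁, 0 < x := fun x hx => h₀pos.trans_le hx.1
  have hcont : ContinuousOn f (Set.Icc h₀ h₁) := by
    apply ContinuousOn.sub
    · apply ContinuousOn.add
      · apply ContinuousOn.sub
        · exact (continuousOn_id.div (continuousOn_const.add continuousOn_id)
            (fun x hx => by have := hpos x hx; show Kb + x ≠ 0; positivity)).mul continuousOn_const
        · exact (continuousOn_const.div (continuousOn_const.add continuousOn_id)
            (fun x hx => by have := hpos x hx; show Ka + x ≠ 0; positivity)).mul continuousOn_const
      · exact continuousOn_id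
    · exact continuousOn_const.div continuousOn_id (fun x hx => (hpos x hx).ne')
  have hf0 : f h₀ ≤ -1 := by
    have h1 : h₀ / (Kb + h₀) * b ≤ b := by
      have : h₀ / (Kb + h₀) ≤ 1 :=
        div_le_one_of_le₀ (by linarith) (by positivity)
      nlinarith
    have h2 : 0 ≤ Ka / (Ka + h₀) * a := by positivity
    have h3 : b + 2 ≤ Kw ^ 2 / h₀ := by
      rw [le_div_iff₀ h₀pos]
      have := min_le_right 1 (Kw ^ 2 / (b + 2))
      rw [hh₀]
      calc (b + 2) * min 1 (Kw ^ 2 / (b + 2)) ≤ (b + 2) * (Kw ^ 2 / (b + 2)) := by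
            apply mul_le_mul_of_nonneg_left (min_le_right _ _) (by linarith)
        _ = Kw ^ 2 := by field_simp
    simp only [hf]
    nlinarith
  have hf1 : 1 ≤ f h₁ := by
    have h1 : 0 ≤ h₁ / (Kb + h₁) * b := by
      have := h₀pos.trans_le h₀le₁; positivity
    have h2 : Ka / (Ka + h₁) * a ≤ a := by
      have hp : 0 < Ka + h₁ := by have := h₀pos.trans_le h₀le₁; positivity
      have : Ka / (Ka + h₁) ≤ 1 := div_le_one_of_le₀ (by linarith [h₀pos.trans_le h₀le₁]) hp.le
      nlinarith
    have h3 : Kw ^ 2 / h₁ ≤ Kw ^ 2 := by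
      rw [div_le_iff₀ (h₀pos.trans_le h₀le₁)]
      nlinarith
    have h4 : a + 1 + Kw ^ 2 ≤ h₁ := le_max_right _ _
    simp only [hf]
    nlinarith
  have hivt := intermediate_value_Icc h₀le₁ hcont
  have h0mem : (0 : ℝ) ∈ Set.Icc (f h₀) (f h₁) := ⟨by linarith, by linarith⟩
  obtain ⟨x, hx, hfx⟩ := hivt h0mem
  exact ⟨x, hpos x hx, hfx⟩
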